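/- The point K₁ = (1, 0, 0) (the monomorphic altruistic-punisher state) is an equilibrium of F, and charpoly(J(K₁)) = X · (X − (b − β − 1)) · (X − (ε − 1)); in particular, if b > 1 + β then J(K₁) has the positive real eigenvalue b − β − 1, so K₁ is linearly unstable. -/

import Mathlib

noncomputable section

open Polynomial

/-- Payoff of altruistic punishers. -/
def PiAP (γ x y z : ℝ) : ℝ := x + y - γ * z

/-- Payoff of non-punishing cooperators. -/
def PiNC (x y : ℝ) : ℝ := x + y

/-- Payoff of defectors. -/
def PiD (b β x y : ℝ) : ℝ := (b - β) * x + b * y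

/-- First component of the reduced replicator vector field. -/
def fRep (b β γ ε x y z : ℝ) : ℝ :=
  x * ((1 - x) * (PiAP γ x y z - ε) - y * (PiNC x y - ε) - z * (PiD b β x y - ε))

/-- Second component of the reduced replicator vector field. -/
def gRep (b β γ ε x y z : ℝ) : ℝ :=
  y * ((1 - y) * (PiNC x y - ε) - x * (PiAP γ x y z - ε) - z * (PiD b β x y - ε))

/-- Third component of the reduced replicator vector field. -/
def hRep (b β γ ε x y z : ℝ) : ℝ :=
  z * ((1 - z) * (PiD b β x y - ε) - y * (PiNC x y - ε) - x * (PiAP γ x y z - ε))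

/-- The reduced replicator vector field `F : ℝ³ → ℝ³`. -/
def Fv (b β γ ε : ℝ) (p : ℝ × ℝ × ℝ) : ℝ × ℝ × ℝ :=
  (fRep b β γ ε p.1 p.2.1 p.2.2,
   gRep b β γ ε p.1 p.2.1 p.2.2,
   hRep b β γ ε p.1 p.2.1 p.2.2)

/-- Partial derivative in the first variable. -/
def pd1 (F : ℝ → ℝ → ℝ → ℝ) (p : ℝ × ℝ × ℝ) : ℝ :=
  deriv (fun x => F x p.2.1 p.2.2) p.1

/-- Partial derivative in the second variable. -/
def pd2 (F : ℝ → ℝ → ℝ → ℝ) (p : ℝ × ℝ × ℝ) : ℝ :=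
  deriv (fun y => F p.1 y p.2.2) p.2.1

/-- Partial derivative in the third variable. -/
def pd3 (F : ℝ → ℝ → ℝ → ℝ) (p : ℝ × ℝ × ℝ) : ℝ :=
  deriv (fun z => F p.1 p.2.1 z) p.2.2

/-- The Jacobian matrix of the reduced replicator vector field at `p`. -/
def Jac (b β γ ε : ℝ) (p : ℝ × ℝ × ℝ) : Matrix (Fin 3) (Fin 3) ℝ :=
  !![pd1 (fRep b β γ ε) p, pd2 (fRep b β γ ε) p, pd3 (fRep b β γ ε) p;
     pd1 (gRep b β γ ε) p, pd2 (gRep b β γ ε) p, pd3 (gRep b β γ ε) p;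
     pd1 (hRep b β γ ε) p, pd2 (hRep b β γ ε) p, pd3 (hRep b β γ ε) p]


private lemma deriv_cubic (a b c d t : ℝ) :
    deriv (fun x : ℝ => a*x^3 + b*x^2 + c*x + d) t = 3*a*t^2 + 2*b*t + c := by
  have h := ((((hasDerivAt_pow 3 t).const_mul a).add ((hasDerivAt_pow 2 t).const_mul b)).add
      ((hasDerivAt_id t).const_mul c)).add (hasDerivAt_const t d)
  simp only [id] at h
  refine h.deriv.trans ?_; push_cast; ring

/-- the monomorphic altruistic-punisher state `K₁ = (1,0,0)`. -/
theorem K1_equilibrium_charpoly_unstable (b β γ ε : ℝ)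
    (hb : 1 < b) (hβ : 0 < β) (hγ : 0 < γ) (hε : ε < 1) :
    Fv b β γ ε (1, 0, 0) = (0, 0, 0) ∧
    (Jac b β γ ε (1, 0, 0)).charpoly =
      X * (X - C (b - β - 1)) * (X - C (ε - 1)) ∧
    (1 + β < b →
      0 < b - β - 1 ∧ ((Jac b β γ ε (1, 0, 0)).charpoly).IsRoot (b - β - 1)) := by
  have hJ : Jac b β γ ε (1, 0, 0) =
      !![ε - 1, ε - 1, ε - b + β; 0, 0, 0; 0, 0, b - β - 1] := by
    have e1 : pd1 (fRep b β γ ε) (1, 0, 0) = ε - 1 := by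
      have h : (fun x => fRep b β γ ε x (1,(0:ℝ),(0:ℝ)).2.1 (1,(0:ℝ),(0:ℝ)).2.2)
          = fun x : ℝ => (-1)*x^3 + (1+ε)*x^2 + (-ε)*x + 0 := by
        funext x; simp [fRep, PiAP, PiNC, PiD]; ring
      rw [pd1, h, deriv_cubic]; ring
    have e2 : pd2 (fRep b β γ ε) (1, 0, 0) = ε - 1 := by
      have h : (fun y => fRep b β γ ε 1 y (0:ℝ))
          = fun y : ℝ => 0*y^3 + (-1)*y^2 + (ε-1)*y + 0 := by
        funext y; simp [fRep, PiAP, PiNC, PiD]; ring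
      rw [pd2, h, deriv_cubic]; ring
    have e3 : pd3 (fRep b β γ ε) (1, 0, 0) = ε - b + β := by
      have h : (fun z => fRep b β γ ε 1 0 z)
          = fun z : ℝ => 0*z^3 + 0*z^2 + (ε-b+β)*z + 0 := by
        funext z; simp [fRep, PiAP, PiNC, PiD]; ring
      rw [pd3, h, deriv_cubic]; ring
    have e4 : pd1 (gRep b β γ ε) (1, 0, 0) = 0 := by
      have h : (fun x => gRep b β γ ε x (0:ℝ) (0:ℝ))
          = fun x : ℝ => 0*x^3 + 0*x^2 + 0*x + 0 := by
        funext x; simp [gRep, PiAP, PiNC, PiD]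
      rw [pd1, h, deriv_cubic]; ring
    have e5 : pd2 (gRep b β γ ε) (1, 0, 0) = 0 := by
      have h : (fun y => gRep b β γ ε 1 y (0:ℝ))
          = fun y : ℝ => (-1)*y^3 + (ε-1)*y^2 + 0*y + 0 := by
        funext y; simp [gRep, PiAP, PiNC, PiD]; ring
      rw [pd2, h, deriv_cubic]; ring
    have e6 : pd3 (gRep b β γ ε) (1, 0, 0) = 0 := by
      have h : (fun z => gRep b β γ ε 1 0 z)
          = fun z : ℝ => 0*z^3 + 0*z^2 + 0*z + 0 := by
        funext z; simp [gRep, PiAP, PiNC, PiD]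
      rw [pd3, h, deriv_cubic]; ring
    have e7 : pd1 (hRep b β γ ε) (1, 0, 0) = 0 := by
      have h : (fun x => hRep b β γ ε x (0:ℝ) (0:ℝ))
          = fun x : ℝ => 0*x^3 + 0*x^2 + 0*x + 0 := by
        funext x; simp [hRep, PiAP, PiNC, PiD]
      rw [pd1, h, deriv_cubic]; ring
    have e8 : pd2 (hRep b β γ ε) (1, 0, 0) = 0 := by
      have h : (fun y => hRep b β γ ε 1 y (0:ℝ))
          = fun y : ℝ => 0*y^3 + 0*y^2 + 0*y + 0 := by
        funext y; simp [hRep, PiAP, PiNC, PiD]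
      rw [pd2, h, deriv_cubic]; ring
    have e9 : pd3 (hRep b β γ ε) (1, 0, 0) = b - β - 1 := by
      have h : (fun z => hRep b β γ ε 1 0 z)
          = fun z : ℝ => 0*z^3 + (γ-(b-β-ε))*z^2 + (b-β-1)*z + 0 := by
        funext z; simp [hRep, PiAP, PiNC, PiD]; ring
      rw [pd3, h, deriv_cubic]; ring
    rw [Jac, e1, e2, e3, e4, e5, e6, e7, e8, e9]
  refine ⟨?_, ?_, ?_⟩
  · simp [Fv, fRep, gRep, hRep, PiAP, PiNC, PiD]
  · rw [hJ, Matrix.charpoly, Matrix.det_fin_three]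
    simp [Matrix.charmatrix_apply, Matrix.diagonal_apply, Matrix.vecHead, Matrix.vecTail]
    ring
  · intro hlt
    refine ⟨by linarith, ?_⟩
    rw [hJ, Matrix.charpoly, Matrix.det_fin_three]
    simp [Matrix.charmatrix_apply, Matrix.diagonal_apply, Matrix.vecHead, Matrix.vecTail, Polynomial.IsRoot]
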